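/- Let p be a natural number, δ ∈ (0,1), and let g : ℝ → ℝ be (p+1)-times continuously differentiable on an open set containing the interval [1-δ, 1+δ] and satisfy g(s*t) = g(s)*g(t) for all s, t > 0. Let T₁ and T₂ be finite index sets, q : T₁ → ℝ, k : T₂ → ℝ, and k* ∈ ℝ be such that q i > k* for every i ∈ T₁ and |k j - k*| ≤ δ*(q i - k*) for every i ∈ T₁ and j ∈ T₂. Let M = sup over t ∈ [1-δ, 1+δ] of |g^{(p+1)}(t)|, where g^{(p+1)} is the (p+1)-th derivative of g. Define U : T₁ × Fin (p+1) → ℝ by U(i, m) = g(q i - k*) / (q i - k*)^m and V : T₂ × Fin (p+1) → ℝ by V(j, m) = (g^{(m)}(1) / m!) * (k* - k j)^m, where g^{(m)} denotes the m-th derivative of g. Then for all i ∈ T₁ and j ∈ T₂, |g(q i - k j) - ∑_{m=0}^{p} U(i, m) * V(j, m)| ≤ |g(q i - k*)| * M * δ^(p+1) / (p+1)!. -/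

import Mathlib

open Set Finset

lemma myIterWithinEq {n : ℕ} {g : ℝ → ℝ} {s : Set ℝ} (hs : IsOpen s)
    (hg : ContDiffOn ℝ n g s) {a b : ℝ} (hab : a < b) (hsub : Set.Icc a b ⊆ s)
    {x : ℝ} (hx : x ∈ Set.Icc a b) {m : ℕ} (hm : m ≤ n) :
    iteratedDerivWithin m g (Set.Icc a b) x = iteratedDeriv m g x := by
  have H1 := hg.ftaylorSeriesWithin hs.uniqueDiffOn
  have H2 := (H1.mono hsub).eq_iteratedFDerivWithin_of_uniqueDiffOn
    (by exact_mod_cast hm) (uniqueDiffOn_Icc hab) hx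
  have H3 : iteratedFDerivWithin ℝ m g s x = iteratedFDeriv ℝ m g x :=
    iteratedFDerivWithin_of_isOpen m hs (hsub hx)
  rw [iteratedDerivWithin_eq_iteratedFDerivWithin, ← H2, iteratedDeriv_eq_iteratedFDeriv,
    show ftaylorSeriesWithin ℝ g s x m = iteratedFDerivWithin ℝ m g s x from rfl, H3]

lemma myIterReflect (n : ℕ) (g : ℝ → ℝ) (y : ℝ) :
    iteratedDeriv n (fun x => g (2 - x)) y = (-1 : ℝ) ^ n • iteratedDeriv n g (2 - y) := by
  have h1 := iteratedDeriv_comp_neg n (fun z => g (2 + z)) y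
  simp only [iteratedDeriv_comp_const_add] at h1
  simp only [sub_eq_add_neg] at h1 ⊢
  exact h1

lemma myTaylorCore (p : ℕ) (δ : ℝ) (hδ0 : 0 < δ) (g : ℝ → ℝ) (s : Set ℝ)
    (hs : IsOpen s) (hsub : Set.Icc (1 - δ) (1 + δ) ⊆ s)
    (hg : ContDiffOn ℝ (p + 1 : ℕ) g s)
    (M : ℝ) (hMb : ∀ y ∈ Set.Icc (1 - δ) (1 + δ), |iteratedDeriv (p + 1) g y| ≤ M)
    (t : ℝ) (ht : t ∈ Set.Icc (1 - δ) (1 + δ)) (h1t : 1 < t) :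
    |g t - ∑ m ∈ Finset.range (p + 1),
        iteratedDeriv m g 1 / (Nat.factorial m : ℝ) * (t - 1) ^ m| ≤
      M * δ ^ (p + 1) / (Nat.factorial (p + 1) : ℝ) := by
  have hIcc : Set.Icc (1 : ℝ) t ⊆ Set.Icc (1 - δ) (1 + δ) :=
    Set.Icc_subset_Icc (by linarith) ht.2
  have hIccs : Set.Icc (1 : ℝ) t ⊆ s := hIcc.trans hsub
  have hf : ContDiffOn ℝ p g (Set.Icc 1 t) :=
    (hg.mono hIccs).of_le (by exact_mod_cast Nat.le_succ p)
  have hf' : DifferentiableOn ℝ (iteratedDerivWithin p g (Set.Icc 1 t)) (Set.Ioo 1 t) :=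
    ((hg.mono hIccs).differentiableOn_iteratedDerivWithin
      (by exact_mod_cast Nat.lt_succ_self p) (uniqueDiffOn_Icc h1t)).mono Set.Ioo_subset_Icc_self
  obtain ⟨x', hx', hEq⟩ := taylor_mean_remainder_lagrange (x₀ := 1) (x := t) h1t.ne
    (by rwa [Set.uIcc_of_le h1t.le]) (by rwa [Set.uIcc_of_le h1t.le, Set.uIoo_of_le h1t.le])
  rw [Set.uIcc_of_le h1t.le] at hEq; rw [Set.uIoo_of_le h1t.le] at hx'
  have hTay : taylorWithinEval g p (Set.Icc 1 t) 1 t =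
      ∑ m ∈ Finset.range (p + 1),
        iteratedDeriv m g 1 / (Nat.factorial m : ℝ) * (t - 1) ^ m := by
    rw [taylor_within_apply]
    refine Finset.sum_congr rfl fun m hm => ?_
    rw [myIterWithinEq hs hg h1t hIccs (Set.left_mem_Icc.2 h1t.le)
      ((Nat.le_of_lt_succ (Finset.mem_range.1 hm)).trans (Nat.le_succ p))]
    rw [smul_eq_mul]
    ring
  rw [← hTay, hEq, myIterWithinEq hs hg h1t hIccs (Set.Ioo_subset_Icc_self hx') le_rfl]
  have hx'mem : x' ∈ Set.Icc (1 - δ) (1 + δ) := hIcc (Set.Ioo_subset_Icc_self hx')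
  have hd : |iteratedDeriv (p + 1) g x'| ≤ M := hMb x' hx'mem
  have htδ : |t - 1| ≤ δ := by
    rw [abs_of_nonneg (by linarith)]; linarith [ht.2]
  have hM0 : 0 ≤ M := (abs_nonneg _).trans hd
  rw [abs_div, abs_mul, abs_pow, Nat.abs_cast]
  gcongr


lemma myTaylorBound (p : ℕ) (δ : ℝ) (hδ0 : 0 < δ) (hδ1 : δ < 1) (g : ℝ → ℝ) (s : Set ℝ)
    (hs : IsOpen s) (hsub : Set.Icc (1 - δ) (1 + δ) ⊆ s)
    (hg : ContDiffOn ℝ (p + 1 : ℕ) g s)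
    (M : ℝ) (hMb : ∀ y ∈ Set.Icc (1 - δ) (1 + δ), |iteratedDeriv (p + 1) g y| ≤ M)
    (t : ℝ) (ht : t ∈ Set.Icc (1 - δ) (1 + δ)) :
    |g t - ∑ m ∈ Finset.range (p + 1),
        iteratedDeriv m g 1 / (Nat.factorial m : ℝ) * (t - 1) ^ m| ≤
      M * δ ^ (p + 1) / (Nat.factorial (p + 1) : ℝ) := by
  have hM0 : 0 ≤ M := (abs_nonneg _).trans (hMb 1 ⟨by linarith, by linarith⟩)
  rcases lt_trichotomy t 1 with hlt | heq | hgt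
  · -- reflect
    set g' : ℝ → ℝ := fun y => g (2 - y) with hg'def
    set s' : Set ℝ := (fun y : ℝ => 2 - y) ⁻¹' s with hs'def
    have hs' : IsOpen s' := hs.preimage (by continuity)
    have hsub' : Set.Icc (1 - δ) (1 + δ) ⊆ s' := by
      intro y hy
      have : (2 : ℝ) - y ∈ Set.Icc (1 - δ) (1 + δ) := ⟨by linarith [hy.2], by linarith [hy.1]⟩
      exact hsub this
    have hgc : ContDiffOn ℝ (p + 1 : ℕ) g' s' :=
      hg.comp ((contDiff_const.sub contDiff_id).contDiffOn) (fun y hy => hy)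
    have hMb' : ∀ y ∈ Set.Icc (1 - δ) (1 + δ), |iteratedDeriv (p + 1) g' y| ≤ M := by
      intro y hy
      rw [hg'def, myIterReflect, smul_eq_mul, abs_mul, abs_pow, abs_neg, abs_one, one_pow,
        one_mul]
      exact hMb _ ⟨by linarith [hy.2], by linarith [hy.1]⟩
    have ht' : 2 - t ∈ Set.Icc (1 - δ) (1 + δ) := ⟨by linarith [ht.2], by linarith [ht.1]⟩
    have key := myTaylorCore p δ hδ0 g' s' hs' hsub' hgc M hMb' (2 - t) ht' (by linarith)
    have hgt' : g' (2 - t) = g t := by simp [hg'def]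
    have hterm : ∀ m ∈ Finset.range (p + 1),
        iteratedDeriv m g' 1 / (Nat.factorial m : ℝ) * ((2 - t) - 1) ^ m
          = iteratedDeriv m g 1 / (Nat.factorial m : ℝ) * (t - 1) ^ m := by
      intro m _
      rw [hg'def, myIterReflect, show (2 : ℝ) - 1 = 1 by norm_num, smul_eq_mul,
        show ((2 - t) - 1 : ℝ) = -(t - 1) by ring]
      have hpow : ((-1 : ℝ) ^ m) * (-(t - 1)) ^ m = (t - 1) ^ m := by
        rw [← mul_pow]; norm_num
      linear_combination (iteratedDeriv m g 1 / (Nat.factorial m : ℝ)) * hpow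
    rwa [hgt', Finset.sum_congr rfl hterm] at key
  · subst heq
    have hsum : ∑ m ∈ Finset.range (p + 1),
        iteratedDeriv m g 1 / (Nat.factorial m : ℝ) * ((1 : ℝ) - 1) ^ m = g 1 := by
      rw [Finset.sum_range_succ']
      simp
    rw [hsum, sub_self, abs_zero]
    positivity
  · exact myTaylorCore p δ hδ0 g s hs hsub hg M hMb t ht hgt

/-- Scalar case of Lemma 1 of the paper, with the explicit rank-(p+1)
factorization `U Vᵀ` and Lagrange-remainder error bound from its proof. -/
theorem lemma1_scalar_taylor_bound
    (p : ℕ) (δ : ℝ) (hδ : δ ∈ Set.Ioo (0 : ℝ) 1)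
    (g : ℝ → ℝ)
    (s : Set ℝ) (hs : IsOpen s) (hsub : Set.Icc (1 - δ) (1 + δ) ⊆ s)
    (hg : ContDiffOn ℝ (p + 1 : ℕ) g s)
    (hmul : ∀ a b : ℝ, 0 < a → 0 < b → g (a * b) = g a * g b)
    (T₁ T₂ : Type*) [Fintype T₁] [Fintype T₂]
    (q : T₁ → ℝ) (k : T₂ → ℝ) (kstar : ℝ)
    (hq : ∀ i, kstar < q i)
    (hsep : ∀ i j, |k j - kstar| ≤ δ * (q i - kstar))
    (M : ℝ)
    (hM : M = ⨆ t : Set.Icc (1 - δ) (1 + δ), |iteratedDeriv (p + 1) g t|)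
    (U : T₁ × Fin (p + 1) → ℝ) (V : T₂ × Fin (p + 1) → ℝ)
    (hU : ∀ i m, U (i, m) = g (q i - kstar) / (q i - kstar) ^ (m : ℕ))
    (hV : ∀ j m, V (j, m) =
      (iteratedDeriv (m : ℕ) g 1 / (Nat.factorial (m : ℕ) : ℝ)) *
        (kstar - k j) ^ (m : ℕ)) :
    ∀ i j,
      |g (q i - k j) - ∑ m : Fin (p + 1), U (i, m) * V (j, m)| ≤
        |g (q i - kstar)| * M * δ ^ (p + 1) / (Nat.factorial (p + 1) : ℝ) := by
  obtain ⟨hδ0, hδ1⟩ := hδ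
  -- the sup bound
  have hcont_s : ContinuousOn (iteratedDeriv (p + 1) g) s := by
    have h1 : ContinuousOn (iteratedDerivWithin (p + 1) g s) s :=
      hg.continuousOn_iteratedDerivWithin le_rfl hs.uniqueDiffOn
    refine h1.congr fun x hx => ?_
    rw [iteratedDerivWithin_eq_iteratedFDerivWithin, iteratedDeriv_eq_iteratedFDeriv,
      iteratedFDerivWithin_of_isOpen _ hs hx]
  have hbdd : BddAbove (Set.range fun y : Set.Icc (1 - δ) (1 + δ) =>
      |iteratedDeriv (p + 1) g (y : ℝ)|) := by
    refine ((isCompact_Icc.image_of_continuousOn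
      ((hcont_s.mono hsub).abs)).bddAbove).mono ?_
    rintro _ ⟨y, rfl⟩
    exact ⟨y, y.2, rfl⟩
  have hMb : ∀ y ∈ Set.Icc (1 - δ) (1 + δ), |iteratedDeriv (p + 1) g y| ≤ M := by
    intro y hy
    rw [hM]
    exact le_ciSup hbdd ⟨y, hy⟩
  intro i j
  set a : ℝ := q i - kstar with ha_def
  have ha : 0 < a := sub_pos.2 (hq i)
  set t : ℝ := (q i - k j) / a with ht_def
  have hta : q i - k j = a * t := by rw [ht_def, mul_div_cancel₀ _ ha.ne']
  have htsub : t - 1 = (kstar - k j) / a := by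
    rw [ht_def]; field_simp; ring
  have habs : |t - 1| ≤ δ := by
    rw [htsub, abs_div, abs_of_pos ha, div_le_iff₀ ha]
    calc |kstar - k j| = |k j - kstar| := abs_sub_comm _ _
      _ ≤ δ * a := hsep i j
  have habs' := abs_le.1 habs
  have ht : t ∈ Set.Icc (1 - δ) (1 + δ) := ⟨by linarith [habs'.1], by linarith [habs'.2]⟩
  have htpos : 0 < t := by linarith [habs'.1]
  have hg2 : g (q i - k j) = g a * g t := by rw [hta, hmul a t ha htpos]
  have key := myTaylorBound p δ hδ0 hδ1 g s hs hsub hg M hMb t ht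
  have hsum : ∑ m : Fin (p + 1), U (i, m) * V (j, m) =
      g a * ∑ m ∈ Finset.range (p + 1),
        iteratedDeriv m g 1 / (Nat.factorial m : ℝ) * (t - 1) ^ m := by
    rw [Finset.mul_sum, ← Fin.sum_univ_eq_sum_range]
    refine Finset.sum_congr rfl fun m _ => ?_
    rw [hU, hV, htsub, div_pow]
    ring
  rw [hg2, hsum, ← mul_sub, abs_mul]
  calc |g a| * |g t - ∑ m ∈ Finset.range (p + 1),
        iteratedDeriv m g 1 / (Nat.factorial m : ℝ) * (t - 1) ^ m|
      ≤ |g a| * (M * δ ^ (p + 1) / (Nat.factorial (p + 1) : ℝ)) :=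
        mul_le_mul_of_nonneg_left key (abs_nonneg _)
    _ = |g a| * M * δ ^ (p + 1) / (Nat.factorial (p + 1) : ℝ) := by ring
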